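/- Let q ≥ 3 and k ≥ 2 be integers, and let γ be the dominant root of Φ_{q,k}, i.e. the unique real root of Φ_{q,k}(t) = t^k − q t^{k−1} − t^{k−2} − ⋯ − t − 1 in (q, q+1). Then the error E^{(k)}_{q,n} = F^{(k)}_{q,n} − g_{q,k}(γ)·γ^n tends to 0 as n → ∞, where g_{q,k}(x) = (x−1)/((k+1)x² − (q+1)kx + (q−1)(k−1)). -/

import Mathlib

open Filter Polynomial

set_option maxHeartbeats 2000000

/-- If `‖z‖ < 1` and `v (n+1) - z * v n → 0`, then `v → 0`. -/
lemma lemL_aux (z : ℂ) (hz : ‖z‖ < 1) (v : ℕ → ℂ)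
    (hv : Tendsto (fun n => v (n+1) - z * v n) atTop (nhds 0)) :
    Tendsto v atTop (nhds 0) := by
  rw [NormedAddCommGroup.tendsto_nhds_zero] at hv ⊢
  intro ε hε
  have hz0 : (0:ℝ) ≤ ‖z‖ := norm_nonneg z
  have h1z : 0 < 1 - ‖z‖ := by linarith
  have hδ : 0 < ε * (1 - ‖z‖) / 2 := by positivity
  obtain ⟨N, hN⟩ := (hv (ε * (1 - ‖z‖) / 2) hδ).exists_forall_of_atTop
  have key : ∀ m : ℕ, ‖v (N + m)‖ ≤ ‖z‖^m * ‖v N‖ + ε/2 := by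
    intro m
    induction m with
    | zero => simp; positivity
    | succ m ih =>
      have hb := le_of_lt (hN (N + m) (Nat.le_add_right _ _))
      have hvv : v (N + m + 1) = z * v (N + m) + (v (N + m + 1) - z * v (N + m)) := by ring
      calc ‖v (N + (m+1))‖ = ‖z * v (N + m) + (v (N + m + 1) - z * v (N + m))‖ := by
            rw [← hvv]; ring_nf
        _ ≤ ‖z‖ * ‖v (N + m)‖ + ‖v (N + m + 1) - z * v (N + m)‖ := by
            refine (norm_add_le _ _).trans ?_; rw [norm_mul]
        _ ≤ ‖z‖ * (‖z‖^m * ‖v N‖ + ε/2) + ε * (1 - ‖z‖) / 2 := by gcongr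
        _ = ‖z‖^(m+1) * ‖v N‖ + ε/2 := by ring
  have h2 : Tendsto (fun m : ℕ => ‖z‖^m * ‖v N‖) atTop (nhds 0) := by
    simpa using (tendsto_pow_atTop_nhds_zero_of_lt_one hz0 hz).mul_const ‖v N‖
  obtain ⟨M, hM⟩ := (h2.eventually (gt_mem_nhds (half_pos hε))).exists_forall_of_atTop
  filter_upwards [eventually_ge_atTop (N + M)] with n hn
  have h3 : ‖v (N + (n - N))‖ ≤ ‖z‖^(n-N) * ‖v N‖ + ε/2 := key (n - N)
  rw [Nat.add_sub_cancel' (by omega : N ≤ n)] at h3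
  have h4 : ‖z‖^(n-N) * ‖v N‖ < ε/2 := hM (n - N) (by omega)
  linarith

/-- If `p` is monic with all roots in the open unit disc and the `p`-recurrence
combination of `e` tends to `0`, then `e` tends to `0`. -/
lemma lemM_aux : ∀ (d : ℕ) (p : Polynomial ℂ), p.Monic → p.natDegree = d →
    (∀ z, p.IsRoot z → ‖z‖ < 1) → ∀ e : ℕ → ℂ,
    Tendsto (fun n => ∑ i ∈ Finset.range (d+1), p.coeff i * e (n+i)) atTop (nhds 0) →
    Tendsto e atTop (nhds 0) := by
  intro d
  induction d with
  | zero =>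
    intro p hm hd _ e he
    have h0 : p.coeff 0 = 1 := by
      have := hm.leadingCoeff
      rwa [Polynomial.leadingCoeff, hd] at this
    simpa [h0] using he
  | succ d ih =>
    intro p hm hd hroots e he
    obtain ⟨z, hz⟩ : ∃ z, p.IsRoot z :=
      Complex.exists_root (by rw [← Polynomial.natDegree_pos_iff_degree_pos]; omega)
    have hfact : (X - C z) * (p /ₘ (X - C z)) = p :=
      (Polynomial.mul_divByMonic_eq_iff_isRoot).mpr hz
    set r := p /ₘ (X - C z) with hr
    have hrm : r.Monic := by
      refine Polynomial.Monic.of_mul_monic_left (Polynomial.monic_X_sub_C z) ?_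
      rwa [hfact]
    have hrne : r ≠ 0 := hrm.ne_zero
    have hrd : r.natDegree = d := by
      have := Polynomial.natDegree_mul (Polynomial.X_sub_C_ne_zero z) hrne
      rw [hfact, hd, Polynomial.natDegree_X_sub_C] at this
      omega
    have hznorm : ‖z‖ < 1 := hroots z hz
    have hrroots : ∀ w, r.IsRoot w → ‖w‖ < 1 := by
      intro w hw
      refine hroots w ?_
      rw [← hfact]
      simp [Polynomial.IsRoot, hw.eq_zero]
    set v : ℕ → ℂ := fun n => ∑ i ∈ Finset.range (d+1), r.coeff i * e (n+i) with hv
    have hop : ∀ n, (∑ i ∈ Finset.range (d+2), p.coeff i * e (n+i)) = v (n+1) - z * v n := by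
      intro n
      have hc0 : p.coeff 0 = -z * r.coeff 0 := by
        rw [← hfact, Polynomial.mul_coeff_zero]
        simp [mul_comm]
      have hcs : ∀ i : ℕ, p.coeff (i+1) = r.coeff i - r.coeff (i+1) * z := by
        intro i
        rw [← hfact, mul_comm (X - C z) r, Polynomial.coeff_mul_X_sub_C]
      have hrtop : r.coeff (d+1) = 0 := Polynomial.coeff_eq_zero_of_natDegree_lt (by omega)
      rw [Finset.sum_range_succ' (fun i => p.coeff i * e (n+i)) (d+1)]
      simp only [hcs, hc0, Nat.add_zero]
      have e1 : ∑ i ∈ Finset.range (d+1), (r.coeff i - r.coeff (i+1) * z) * e (n+(i+1))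
          = (∑ i ∈ Finset.range (d+1), r.coeff i * e (n+1+i))
            - z * ∑ i ∈ Finset.range (d+1), r.coeff (i+1) * e (n+(i+1)) := by
        rw [Finset.mul_sum, ← Finset.sum_sub_distrib]
        apply Finset.sum_congr rfl
        intro i _
        have : n + (i+1) = n + 1 + i := by omega
        rw [this]; ring
      have e2 : (∑ i ∈ Finset.range (d+1), r.coeff (i+1) * e (n+(i+1))) + r.coeff 0 * e n
          = v n := by
        show _ = ∑ i ∈ Finset.range (d+1), r.coeff i * e (n+i)
        rw [Finset.sum_range_succ' (fun i => r.coeff i * e (n+i)) d]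
        rw [Finset.sum_range_succ (fun i => r.coeff (i+1) * e (n+(i+1))) d]
        simp [hrtop]
      have e3 : v (n+1) = ∑ i ∈ Finset.range (d+1), r.coeff i * e (n+1+i) := rfl
      linear_combination e1 - e3 - z * e2
    have hv0 : Tendsto (fun n => v (n+1) - z * v n) atTop (nhds 0) := by
      have : (fun n => ∑ i ∈ Finset.range (d+2), p.coeff i * e (n+i))
           = fun n => v (n+1) - z * v n := funext hop
      rwa [this] at he
    exact ih r hrm hrd hrroots e (lemL_aux z hznorm v hv0)

/-- Coefficient sequence of `Φ_{q,k}(X) / (X - γ)`. -/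
noncomputable def cseq (γ q : ℝ) : ℕ → ℝ
  | 0 => 1
  | 1 => γ - q
  | (j+2) => γ * cseq γ q (j+1) - 1

/-- For integers `q ≥ 3` and `k ≥ 2`, with `γ` the dominant root of
`Φ_{q,k}` (its unique real root in `(q, q+1)`), the error
`E n = F n − g(γ)·γ^n` tends to `0` as `n → ∞`. -/
theorem qk_fib_error_tendsto_zero
    (q : ℤ) (k : ℕ) (hq : 3 ≤ q) (hk : 2 ≤ k)
    (F : ℤ → ℝ)
    (hF0 : ∀ n : ℤ, 2 - (k : ℤ) ≤ n → n ≤ 0 → F n = 0)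
    (hF1 : F 1 = 1)
    (hFrec : ∀ n : ℤ, 2 ≤ n →
      F n = (q : ℝ) * F (n - 1) + ∑ i ∈ Finset.Icc 2 k, F (n - (i : ℤ)))
    (γ : ℝ)
    (hγ_lb : (q : ℝ) < γ) (hγ_ub : γ < (q : ℝ) + 1)
    (hγ_root : γ ^ k - (q : ℝ) * γ ^ (k - 1) - ∑ i ∈ Finset.range (k - 1), γ ^ i = 0)
    (g : ℝ → ℝ)
    (hg : ∀ x : ℝ, g x = (x - 1) /
      (((k : ℝ) + 1) * x ^ 2 - ((q : ℝ) + 1) * (k : ℝ) * x + ((q : ℝ) - 1) * ((k : ℝ) - 1))) :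
    Filter.Tendsto (fun n : ℕ => F (n : ℤ) - g γ * γ ^ n) Filter.atTop (nhds 0) := by
  obtain ⟨K, rfl⟩ : ∃ K, k = K + 2 := ⟨k - 2, by omega⟩
  set Q : ℝ := (q : ℝ) with hQ
  have hq3 : (3:ℝ) ≤ Q := by rw [hQ]; exact_mod_cast hq
  have hγ3 : 3 < γ := lt_of_le_of_lt hq3 hγ_lb
  have hγ1 : 1 < γ := by linarith
  have hγ0 : (0:ℝ) < γ := by linarith
  have hγne : γ ≠ 0 := ne_of_gt hγ0
  set c : ℕ → ℝ := cseq γ Q with hc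
  have hc0 : c 0 = 1 := rfl
  have hc1 : c 1 = γ - Q := rfl
  have hcrec : ∀ j : ℕ, c (j+2) = γ * c (j+1) - 1 := fun j => rfl
  -- root equation in convenient form
  have hroot : γ^(K+2) = Q * γ^(K+1) + ∑ i ∈ Finset.range (K+1), γ^i := by
    have := hγ_root
    simp only [show K + 2 - 1 = K + 1 from rfl] at this
    linarith
  -- closed form for c
  have hmulsum : ∀ m : ℕ, γ * ∑ i ∈ Finset.range m, γ^i = (∑ i ∈ Finset.range (m+1), γ^i) - 1 := by
    intro m
    have hms : ∀ i ∈ Finset.range m, γ * γ^i = γ^(i+1) := fun i _ => by ring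
    rw [Finset.mul_sum, Finset.sum_congr rfl hms, Finset.sum_range_succ' (fun i => γ^i) m]
    simp
  have hclosed : ∀ m : ℕ, c (m+1) = γ^m * (γ - Q) - ∑ i ∈ Finset.range m, γ^i := by
    intro m
    induction m with
    | zero => simp [hc1]
    | succ m ih =>
      rw [hcrec, ih]
      linear_combination -(hmulsum m)
  -- γ * c (K+1) = 1
  have hsumroot : (∑ i ∈ Finset.range (K+1), γ^i) = γ^(K+1)*(γ-Q) := by
    linear_combination -hroot
  have hctop : γ * c (K+1) = 1 := by
    rw [hclosed K]
    have e1 : γ*(γ^K*(γ-Q) - ∑ i ∈ Finset.range K, γ^i)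
        = γ^(K+1)*(γ-Q) - γ * ∑ i ∈ Finset.range K, γ^i := by ring
    rw [e1, ← hsumroot, hmulsum K]
    ring
  -- bounds for c
  have hγ1' : (0:ℝ) < γ - 1 := by linarith
  have hcK1 : c (K+1) = 1/γ := by
    rw [eq_div_iff hγne]; linarith [hctop]
  have hcbdd : ∀ j : ℕ, 1 ≤ j → j ≤ K+1 → 1/γ ≤ c j ∧ c j ≤ 1/(γ-1) := by
    have aux : ∀ d j, j + d = K + 1 → 1 ≤ j → 1/γ ≤ c j ∧ c j ≤ 1/(γ-1) := by
      intro d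
      induction d with
      | zero =>
        intro j hjd _
        have hjK : j = K+1 := by omega
        subst hjK
        rw [hcK1]
        refine ⟨le_refl _, ?_⟩
        rw [div_le_div_iff₀ hγ0 hγ1']
        linarith
      | succ d ih =>
        intro j hjd hj
        have hnext := ih (j+1) (by omega) (by omega)
        have hrec : c (j+1) = γ * c j - 1 := by
          obtain ⟨m, rfl⟩ : ∃ m, j = m + 1 := ⟨j-1, by omega⟩
          exact hcrec m
        have hcj : c j = (c (j+1) + 1)/γ := by
          rw [eq_div_iff hγne]; linarith [hrec]
        have hpos : (0:ℝ) < 1/γ := by positivity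
        constructor
        · rw [hcj, div_le_div_iff₀ hγ0 hγ0]
          nlinarith [hnext.1]
        · rw [hcj, div_le_div_iff₀ hγ0 hγ1']
          have hmul : c (j+1) * (γ-1) ≤ (1/(γ-1)) * (γ-1) :=
            mul_le_mul_of_nonneg_right hnext.2 (le_of_lt hγ1')
          have hone : (1/(γ-1)) * (γ-1) = 1 := by field_simp
          nlinarith
    intro j h1 h2
    exact aux (K+1-j) j (by omega) h1
  have hcpos : ∀ j : ℕ, j ≤ K+1 → 0 < c j := by
    intro j hj
    match j with
    | 0 => rw [hc0]; norm_num
    | (m+1) =>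
      have := (hcbdd (m+1) (by omega) hj).1
      have : (0:ℝ) < 1/γ := by positivity
      linarith [(hcbdd (m+1) (by omega) hj).1]
  have hcmono : ∀ j : ℕ, j ≤ K → c (j+1) ≤ c j := by
    intro j hj
    match j with
    | 0 =>
      have h1 := (hcbdd 1 (by omega) (by omega)).2
      rw [hc0]
      have : 1/(γ-1) ≤ 1 := by rw [div_le_one hγ1']; linarith
      linarith
    | (m+1) =>
      have hb := (hcbdd (m+1) (by omega) (by omega)).2
      rw [hcrec m]
      have hmul : c (m+1) * (γ-1) ≤ (1/(γ-1)) * (γ-1) :=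
        mul_le_mul_of_nonneg_right hb (le_of_lt hγ1')
      have hone : (1/(γ-1)) * (γ-1) = 1 := by field_simp
      nlinarith
  -- the key telescoping identity over ℂ
  have hi1 : K+1-K = 1 := by omega
  have hi0 : K+1-(K+1) = 0 := by omega
  have hc0c : ((c 0 : ℝ) : ℂ) = 1 := by rw [hc0]; norm_num
  have hc1c : ((c 1 : ℝ) : ℂ) = (γ:ℂ) - (Q:ℂ) := by rw [hc1]; push_cast; ring
  have hb0 : (γ:ℂ) * ((c (K+1) : ℝ) : ℂ) = 1 := by
    rw [← Complex.ofReal_mul, hctop]; norm_num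
  have hbrel : ∀ j, j < K → (γ:ℂ) * ((c (K-j) : ℝ) : ℂ) = ((c (K+1-j) : ℝ) : ℂ) + 1 := by
    intro j hj
    have h2 : K+1-j = (K-j-1)+2 := by omega
    have h3 : K-j = (K-j-1)+1 := by omega
    rw [h2, h3, hcrec]
    push_cast
    ring
  have hTel : ∀ z : ℂ, (z - (γ:ℂ)) * (∑ i ∈ Finset.range (K+2), (c (K+1-i) : ℂ) * z^i)
      = z^(K+2) - (Q:ℂ) * z^(K+1) - ∑ i ∈ Finset.range (K+1), z^i := by
    intro z
    have h1 : (z - (γ:ℂ)) * (∑ i ∈ Finset.range (K+2), (c (K+1-i) : ℂ) * z^i)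
        = (∑ i ∈ Finset.range (K+2), (c (K+1-i) : ℂ) * z^(i+1))
          - ∑ i ∈ Finset.range (K+2), (γ:ℂ) * (c (K+1-i) : ℂ) * z^i := by
      rw [sub_mul, Finset.mul_sum, Finset.mul_sum, ← Finset.sum_sub_distrib,
        ← Finset.sum_sub_distrib]
      apply Finset.sum_congr rfl
      intro i _
      ring
    have h2 : (∑ i ∈ Finset.range (K+2), (c (K+1-i) : ℂ) * z^(i+1))
        = (∑ i ∈ Finset.range K, (c (K+1-i) : ℂ) * z^(i+1))
          + (c 1 : ℂ) * z^(K+1) + (c 0 : ℂ) * z^(K+2) := by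
      rw [Finset.sum_range_succ, Finset.sum_range_succ, hi1, hi0]
    have h3 : (∑ i ∈ Finset.range (K+2), (γ:ℂ) * (c (K+1-i) : ℂ) * z^i)
        = (∑ j ∈ Finset.range (K+1), (γ:ℂ) * (c (K+1-j) : ℂ) * z^j)
          + (γ:ℂ) * (c 0 : ℂ) * z^(K+1) := by
      rw [Finset.sum_range_succ, hi0]
    have h4 : (∑ j ∈ Finset.range (K+1), (γ:ℂ) * (c (K+1-j) : ℂ) * z^j)
        = (∑ j ∈ Finset.range K, (γ:ℂ) * (c (K+1-(j+1)) : ℂ) * z^(j+1))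
          + (γ:ℂ) * (c (K+1) : ℂ) := by
      rw [Finset.sum_range_succ' (fun j => (γ:ℂ) * (c (K+1-j) : ℂ) * z^j) K]
      simp
    have h5 : (∑ j ∈ Finset.range K, (γ:ℂ) * (c (K+1-(j+1)) : ℂ) * z^(j+1))
        = (∑ j ∈ Finset.range K, (c (K+1-j) : ℂ) * z^(j+1))
          + ∑ j ∈ Finset.range K, z^(j+1) := by
      rw [← Finset.sum_add_distrib]
      apply Finset.sum_congr rfl
      intro j hj
      have hidx : K+1-(j+1) = K-j := by omega
      rw [hidx]
      linear_combination z^(j+1) * hbrel j (Finset.mem_range.mp hj)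
    have h6 : (∑ i ∈ Finset.range (K+1), z^i) = (∑ j ∈ Finset.range K, z^(j+1)) + 1 := by
      rw [Finset.sum_range_succ' (fun i => z^i) K]
      simp
    rw [h1, h2, h3, h4, h5, h6, hc0c, hc1c]
    linear_combination -hb0
  -- the real sum S = Ψ(γ)
  set S : ℝ := ∑ i ∈ Finset.range (K+2), c (K+1-i) * γ^i with hS
  have hSpos : 0 < S := by
    rw [hS]
    apply Finset.sum_pos
    · intro i hi
      have h1 : 0 < c (K+1-i) := hcpos _ (by omega)
      positivity
    · exact ⟨0, Finset.mem_range.mpr (by omega)⟩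
  have hSne : S ≠ 0 := ne_of_gt hSpos
  have hγK : (0:ℝ) < γ^K := by positivity
  have hgeo : ∀ m : ℕ, (γ-1) * ∑ t ∈ Finset.range m, γ^t = γ^m - 1 := by
    intro m
    rw [mul_comm]
    exact geom_sum_mul γ m
  have hSid : (γ-1) * S
      = γ^K * (((K:ℝ)+3)*γ^2 - (Q+1)*((K:ℝ)+2)*γ + (Q-1)*((K:ℝ)+1)) := by
    rw [hS, Finset.mul_sum, Finset.sum_range_succ, hi0, hc0]
    have hterm : ∀ i ∈ Finset.range (K+1), (γ-1) * (c (K+1-i) * γ^i)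
        = (γ-1)*(γ-Q)*γ^K - γ^K + γ^i := by
      intro i hi
      have hiK : i ≤ K := by
        have := Finset.mem_range.mp hi
        omega
      have hidx : K+1-i = (K-i)+1 := by omega
      rw [hidx, hclosed (K-i)]
      have hpow : γ^(K-i) * γ^i = γ^K := by
        rw [← pow_add]
        congr 1
        omega
      linear_combination ((γ-1)*(γ-Q) - 1) * hpow - γ^i * hgeo (K-i)
    rw [Finset.sum_congr rfl hterm, Finset.sum_add_distrib,
      Finset.sum_const, Finset.card_range, hsumroot]
    push_cast
    ring
  have hDpos : (0:ℝ) < ((K:ℝ)+3)*γ^2 - (Q+1)*((K:ℝ)+2)*γ + (Q-1)*((K:ℝ)+1) := by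
    have h1 : 0 < (γ-1) * S := mul_pos hγ1' hSpos
    nlinarith [hSid]
  have hgval : g γ = γ^K / S := by
    have hcastden : ((↑(K+2):ℝ)+1)*γ^2 - (Q+1)*(↑(K+2):ℝ)*γ + (Q-1)*((↑(K+2):ℝ)-1)
        = ((K:ℝ)+3)*γ^2 - (Q+1)*((K:ℝ)+2)*γ + (Q-1)*((K:ℝ)+1) := by
      push_cast
      ring
    rw [hg γ, hcastden, div_eq_div_iff (ne_of_gt hDpos) hSne]
    linear_combination hSid
  -- error sequence
  set E : ℤ → ℝ := fun m => F m - g γ * γ^m with hE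
  set u : ℤ → ℝ := fun n => ∑ j ∈ Finset.range (K+2), c j * E (n - j) with hu
  have hu1 : u 1 = 0 := by
    have hsplit : u 1 = (∑ j ∈ Finset.range (K+2), c j * F (1 - (j:ℤ)))
        - g γ * ∑ j ∈ Finset.range (K+2), c j * γ^((1:ℤ) - (j:ℤ)) := by
      show (∑ j ∈ Finset.range (K+2), c j * E (1 - (j:ℤ))) = _
      rw [Finset.mul_sum, ← Finset.sum_sub_distrib]
      apply Finset.sum_congr rfl
      intro j _
      simp only [hE]
      ring
    have hFsum : (∑ j ∈ Finset.range (K+2), c j * F (1 - (j:ℤ))) = 1 := by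
      rw [Finset.sum_range_succ' (fun j => c j * F (1 - (j:ℤ))) (K+1)]
      have hzero : ∀ j ∈ Finset.range (K+1), c (j+1) * F (1 - ((j+1:ℕ):ℤ)) = 0 := by
        intro j hj
        have hmem := Finset.mem_range.mp hj
        have hFz : F (1 - ((j+1:ℕ):ℤ)) = 0 := by
          apply hF0 _ (by push_cast; omega) (by push_cast; omega)
        rw [hFz, mul_zero]
      rw [Finset.sum_congr rfl hzero]
      simp [hc0, hF1]
    have hpow : ∀ j ∈ Finset.range (K+2), c j * γ^((1:ℤ) - (j:ℤ))
        = γ^(-(K:ℤ)) * (c j * γ^((K+1-j : ℕ))) := by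
      intro j hj
      have hj2 : j ≤ K+1 := by
        have := Finset.mem_range.mp hj
        omega
      have hcast : ((K+1-j : ℕ) : ℤ) = (K:ℤ)+1-(j:ℤ) := by omega
      have h1 : (1:ℤ) - (j:ℤ) = (-(K:ℤ)) + ((K:ℤ)+1-(j:ℤ)) := by ring
      rw [h1, zpow_add₀ hγne, ← hcast, zpow_natCast]
      ring
    have hreflect : (∑ j ∈ Finset.range (K+2), c j * γ^((K+1-j : ℕ))) = S := by
      rw [hS, ← Finset.sum_range_reflect (fun i => c (K+1-i) * γ^i) (K+2)]
      apply Finset.sum_congr rfl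
      intro j hj
      have hj2 : j < K+2 := Finset.mem_range.mp hj
      have e1 : K+2-1-j = K+1-j := by omega
      have e2 : K+1-(K+1-j) = j := by omega
      rw [e1, e2]
    rw [hsplit, hFsum, Finset.sum_congr rfl hpow, ← Finset.mul_sum, hreflect, hgval]
    have hzp : γ^(-(K:ℤ)) = (γ^K)⁻¹ := by
      rw [zpow_neg, zpow_natCast]
    rw [hzp]
    field_simp
    norm_num
  have hIccR : ∀ (f : ℕ → ℝ), ∑ i ∈ Finset.Icc 2 (K+2), f i = ∑ t ∈ Finset.range (K+1), f (t+2) := by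
    intro f
    rw [← Finset.Ico_add_one_right_eq_Icc, Finset.sum_Ico_eq_sum_range]
    have h1 : K+2+1-2 = K+1 := by omega
    rw [h1]
    apply Finset.sum_congr rfl
    intro t _
    congr 1
    omega
  have hγrec : ∀ n : ℤ, γ^n = Q * γ^(n-1) + ∑ t ∈ Finset.range (K+1), γ^(n-((t:ℤ)+2)) := by
    intro n
    have hbase : γ^n = γ^(n-((K:ℤ)+2)) * γ^((K+2 : ℕ)) := by
      rw [← zpow_natCast γ (K+2), ← zpow_add₀ hγne]
      congr 1
      push_cast
      ring
    have h1 : γ^(n-1) = γ^(n-((K:ℤ)+2)) * γ^((K+1 : ℕ)) := by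
      rw [← zpow_natCast γ (K+1), ← zpow_add₀ hγne]
      congr 1
      push_cast
      ring
    have h2 : ∀ t ∈ Finset.range (K+1), γ^(n-((t:ℤ)+2)) = γ^(n-((K:ℤ)+2)) * γ^((K-t : ℕ)) := by
      intro t ht
      have htK : t ≤ K := by
        have := Finset.mem_range.mp ht
        omega
      rw [← zpow_natCast γ (K-t), ← zpow_add₀ hγne]
      congr 1
      have hcast : ((K-t:ℕ):ℤ) = (K:ℤ)-(t:ℤ) := by omega
      rw [hcast]
      ring
    have h3 : ∑ t ∈ Finset.range (K+1), γ^((K-t:ℕ)) = ∑ i ∈ Finset.range (K+1), γ^i := by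
      have := Finset.sum_range_reflect (fun i => γ^i) (K+1)
      simpa using this
    rw [hbase, h1, Finset.sum_congr rfl h2, ← Finset.mul_sum, h3]
    rw [hroot]
    ring
  have hErec : ∀ n : ℤ, 2 ≤ n →
      E n = Q * E (n-1) + ∑ t ∈ Finset.range (K+1), E (n-((t:ℤ)+2)) := by
    intro n hn
    have hFr := hFrec n hn
    rw [hIccR (fun i => F (n - (i:ℤ)))] at hFr
    push_cast at hFr
    have hγr := hγrec n
    have hsplit2 : ∑ t ∈ Finset.range (K+1), E (n-((t:ℤ)+2))
        = (∑ t ∈ Finset.range (K+1), F (n-((t:ℤ)+2)))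
          - g γ * ∑ t ∈ Finset.range (K+1), γ^(n-((t:ℤ)+2)) := by
      rw [Finset.mul_sum, ← Finset.sum_sub_distrib]
    simp only [hE]
    rw [hsplit2]
    linear_combination hFr - (g γ) * hγr
  have hurec : ∀ n : ℤ, 2 ≤ n → u n = γ * u (n-1) := by
    intro n hn
    have hA : u n = (∑ j ∈ Finset.range K, c (j+2) * E (n - ((j:ℤ)+2)))
        + c 1 * E (n-1) + c 0 * E n := by
      show (∑ j ∈ Finset.range (K+2), c j * E (n - (j:ℤ))) = _
      rw [Finset.sum_range_succ' (fun j => c j * E (n - (j:ℤ))) (K+1),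
          Finset.sum_range_succ' (fun j => c (j+1) * E (n - ((j+1:ℕ):ℤ))) K]
      have hterm : ∀ j ∈ Finset.range K,
          c (j+1+1) * E (n - ((j+1+1:ℕ):ℤ)) = c (j+2) * E (n - ((j:ℤ)+2)) := by
        intro j _
        have hcst : ((j+1+1:ℕ):ℤ) = (j:ℤ)+2 := by push_cast; ring
        rw [hcst]
      rw [Finset.sum_congr rfl hterm]
      norm_num
    have hB : γ * u (n-1) = (∑ j ∈ Finset.range K, γ * (c (j+1) * E (n - ((j:ℤ)+2))))
        + γ * (c 0 * E (n-1)) + γ * (c (K+1) * E (n - ((K:ℤ)+2))) := by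
      show γ * (∑ j ∈ Finset.range (K+2), c j * E (n - 1 - (j:ℤ))) = _
      rw [Finset.mul_sum,
          Finset.sum_range_succ (fun j => γ * (c j * E (n - 1 - (j:ℤ)))) (K+1),
          Finset.sum_range_succ' (fun j => γ * (c j * E (n - 1 - (j:ℤ)))) K]
      have hterm : ∀ j ∈ Finset.range K,
          γ * (c (j+1) * E (n - 1 - ((j+1:ℕ):ℤ))) = γ * (c (j+1) * E (n - ((j:ℤ)+2))) := by
        intro j _
        have hcst : n - 1 - ((j+1:ℕ):ℤ) = n - ((j:ℤ)+2) := by push_cast; ring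
        rw [hcst]
      rw [Finset.sum_congr rfl hterm]
      have e1 : n - 1 - ((0:ℕ):ℤ) = n - 1 := by push_cast; ring
      have e2 : n - 1 - ((K+1:ℕ):ℤ) = n - ((K:ℤ)+2) := by push_cast; ring
      rw [e1, e2]
      all_goals ring
    have hD2 : (∑ j ∈ Finset.range K, c (j+2) * E (n - ((j:ℤ)+2)))
        = (∑ j ∈ Finset.range K, γ * (c (j+1) * E (n - ((j:ℤ)+2))))
          - ∑ j ∈ Finset.range K, E (n - ((j:ℤ)+2)) := by
      rw [← Finset.sum_sub_distrib]
      apply Finset.sum_congr rfl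
      intro j _
      rw [hcrec j]
      ring
    have hC : E n = Q * E (n-1)
        + ((∑ j ∈ Finset.range K, E (n - ((j:ℤ)+2))) + E (n - ((K:ℤ)+2))) := by
      have := hErec n hn
      rwa [Finset.sum_range_succ (fun t => E (n-((t:ℤ)+2))) K] at this
    linear_combination hA - hB + hD2 + hC + (E (n-1)) * hc1
      + (E n - γ * E (n-1)) * hc0 - (E (n - ((K:ℤ)+2))) * hctop
  have huzeroN : ∀ m : ℕ, u (1 + (m:ℤ)) = 0 := by
    intro m
    induction m with
    | zero => simpa using hu1
    | succ m ih =>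
      have h2 : (2:ℤ) ≤ 1 + ((m:ℤ)+1) := by omega
      have := hurec (1 + ((m:ℤ)+1)) h2
      have harg : 1 + ((m:ℤ)+1) - 1 = 1 + (m:ℤ) := by ring
      rw [harg] at this
      push_cast
      rw [show 1 + ((m:ℤ)+1) = 1 + ((m:ℤ)+1) from rfl] at this
      push_cast at this ⊢
      rw [this, ih, mul_zero]
  have huzero : ∀ n : ℤ, 1 ≤ n → u n = 0 := by
    intro n hn
    obtain ⟨m, hm⟩ : ∃ m : ℕ, n = 1 + (m:ℤ) := ⟨(n-1).toNat, by omega⟩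
    rw [hm]; exact huzeroN m
  -- the polynomial P = Ψ over ℂ
  set P : Polynomial ℂ := ∑ i ∈ Finset.range (K+2), Polynomial.monomial i ((c (K+1-i) : ℝ) : ℂ)
    with hP
  have hPcoeff : ∀ n : ℕ, P.coeff n = if n ∈ Finset.range (K+2) then ((c (K+1-n) : ℝ) : ℂ) else 0 := by
    intro n
    rw [hP, Polynomial.finset_sum_coeff]
    rw [← Finset.sum_ite_eq' (Finset.range (K+2)) n (fun i => ((c (K+1-i) : ℝ) : ℂ))]
    apply Finset.sum_congr rfl
    intro i _
    rw [Polynomial.coeff_monomial]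
  have hPtop : P.coeff (K+1) = 1 := by
    rw [hPcoeff (K+1), if_pos (Finset.mem_range.mpr (by omega)), hi0, hc0]
    norm_num
  have hPdeg : P.natDegree = K+1 := by
    have hle : P.natDegree ≤ K+1 := by
      rw [Polynomial.natDegree_le_iff_coeff_eq_zero]
      intro m hm
      rw [hPcoeff m, if_neg (by simp only [Finset.mem_range]; omega)]
    have hge : K+1 ≤ P.natDegree :=
      Polynomial.le_natDegree_of_ne_zero (by rw [hPtop]; norm_num)
    omega
  have hPmonic : P.Monic := by
    rw [Polynomial.Monic, Polynomial.leadingCoeff, hPdeg, hPtop]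
  have hPeval : ∀ z : ℂ, P.eval z = ∑ i ∈ Finset.range (K+2), (c (K+1-i) : ℂ) * z^i := by
    intro z
    rw [hP, Polynomial.eval_finset_sum]
    apply Finset.sum_congr rfl
    intro i _
    rw [Polynomial.eval_monomial]
  have hEK : ∀ z : ℂ, (z - 1) * (∑ i ∈ Finset.range (K+2), (c (K+1-i) : ℂ) * z^i)
      = (c 0 : ℂ) * z^(K+2)
        - (∑ i ∈ Finset.range (K+1), ((c (K-i) : ℂ) - (c (K+1-i) : ℂ)) * z^(i+1))
        - (c (K+1) : ℂ) := by
    intro z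
    have h1 : (z - 1) * (∑ i ∈ Finset.range (K+2), (c (K+1-i) : ℂ) * z^i)
        = (∑ i ∈ Finset.range (K+2), (c (K+1-i) : ℂ) * z^(i+1))
          - ∑ i ∈ Finset.range (K+2), (c (K+1-i) : ℂ) * z^i := by
      rw [sub_mul, one_mul, Finset.mul_sum, ← Finset.sum_sub_distrib,
        ← Finset.sum_sub_distrib]
      apply Finset.sum_congr rfl
      intro i _
      ring
    have h2 : (∑ i ∈ Finset.range (K+2), (c (K+1-i) : ℂ) * z^(i+1))
        = (∑ i ∈ Finset.range (K+1), (c (K+1-i) : ℂ) * z^(i+1)) + (c 0 : ℂ) * z^(K+2) := by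
      rw [Finset.sum_range_succ, hi0]
    have h3 : (∑ i ∈ Finset.range (K+2), (c (K+1-i) : ℂ) * z^i)
        = (∑ i ∈ Finset.range (K+1), (c (K-i) : ℂ) * z^(i+1)) + (c (K+1) : ℂ) := by
      rw [Finset.sum_range_succ' (fun i => (c (K+1-i) : ℂ) * z^i) (K+1)]
      have hterm : ∀ i ∈ Finset.range (K+1),
          (c (K+1-(i+1)) : ℂ) * z^(i+1) = (c (K-i) : ℂ) * z^(i+1) := by
        intro i _
        have : K+1-(i+1) = K-i := by omega
        rw [this]
      rw [Finset.sum_congr rfl hterm]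
      simp only [Nat.sub_zero, pow_zero, mul_one]
    have h4 : (∑ i ∈ Finset.range (K+1), ((c (K-i) : ℂ) - (c (K+1-i) : ℂ)) * z^(i+1))
        = (∑ i ∈ Finset.range (K+1), (c (K-i) : ℂ) * z^(i+1))
          - ∑ i ∈ Finset.range (K+1), (c (K+1-i) : ℂ) * z^(i+1) := by
      rw [← Finset.sum_sub_distrib]
      apply Finset.sum_congr rfl
      intro i _
      ring
    linear_combination h1 + h2 - h3 + h4
  have hProots : ∀ z : ℂ, P.IsRoot z → ‖z‖ < 1 := by
    intro z hz
    have hzeval : ∑ i ∈ Finset.range (K+2), (c (K+1-i) : ℂ) * z^i = 0 := by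
      rw [← hPeval z]
      exact hz
    have hle1 : ‖z‖ ≤ 1 := by
      by_contra hgt
      push_neg at hgt
      have hp1 : (1:ℝ) ≤ ‖z‖^(K+1) := one_le_pow₀ (le_of_lt hgt)
      have h5 : (c 0 : ℂ) * z^(K+2)
          = (∑ i ∈ Finset.range (K+1), ((c (K-i) : ℂ) - (c (K+1-i) : ℂ)) * z^(i+1))
            + (c (K+1) : ℂ) := by
        linear_combination (z-1) * hzeval - hEK z
      have h6 : ‖z‖^(K+2) = ‖(∑ i ∈ Finset.range (K+1),
          ((c (K-i) : ℂ) - (c (K+1-i) : ℂ)) * z^(i+1)) + (c (K+1) : ℂ)‖ := by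
        rw [← h5, hc0]
        push_cast
        rw [one_mul, norm_pow]
      have h7 : ‖(∑ i ∈ Finset.range (K+1),
          ((c (K-i) : ℂ) - (c (K+1-i) : ℂ)) * z^(i+1)) + (c (K+1) : ℂ)‖
          ≤ (∑ i ∈ Finset.range (K+1), (c (K-i) - c (K+1-i)) * ‖z‖^(K+1))
            + c (K+1) * ‖z‖^(K+1) := by
        refine (norm_add_le _ _).trans (add_le_add ?_ ?_)
        · refine (norm_sum_le _ _).trans (Finset.sum_le_sum ?_)
          intro i hi
          have hiK : i < K+1 := Finset.mem_range.mp hi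
          have hmono : c (K+1-i) ≤ c (K-i) := by
            have h := hcmono (K-i) (by omega)
            have he2 : K-i+1 = K+1-i := by omega
            rwa [he2] at h
          have hpos2 : (0:ℝ) ≤ c (K-i) - c (K+1-i) := by linarith
          rw [norm_mul, norm_pow]
          have hnormc : ‖(c (K-i) : ℂ) - (c (K+1-i) : ℂ)‖ = c (K-i) - c (K+1-i) := by
            rw [← Complex.ofReal_sub, Complex.norm_real, Real.norm_eq_abs,
              abs_of_nonneg hpos2]
          rw [hnormc]
          exact mul_le_mul_of_nonneg_left
            (pow_le_pow_right₀ (le_of_lt hgt) (by omega)) hpos2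
        · have hnormc : ‖((c (K+1) : ℝ) : ℂ)‖ = c (K+1) := by
            rw [Complex.norm_real, Real.norm_eq_abs,
              abs_of_nonneg (le_of_lt (hcpos (K+1) (le_refl _)))]
          rw [hnormc]
          nlinarith [hcpos (K+1) (le_refl (K+1))]
      have h8 : (∑ i ∈ Finset.range (K+1), (c (K-i) - c (K+1-i)) * ‖z‖^(K+1))
          = (c 0 - c (K+1)) * ‖z‖^(K+1) := by
        rw [← Finset.sum_mul]
        congr 1
        have hterm : ∀ i ∈ Finset.range (K+1),
            c (K-i) - c (K+1-i) = c (K+1-(i+1)) - c (K+1-i) := by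
          intro i _
          have : K+1-(i+1) = K-i := by omega
          rw [this]
        rw [Finset.sum_congr rfl hterm, Finset.sum_range_sub (fun j => c (K+1-j)) (K+1), hi0,
          Nat.sub_zero]
      have hfin : ‖z‖^(K+2) ≤ ‖z‖^(K+1) := by
        rw [h6]
        refine h7.trans ?_
        rw [h8, hc0]
        ring_nf
        nlinarith [hcpos (K+1) (le_refl (K+1))]
      have : ‖z‖^(K+2) = ‖z‖^(K+1) * ‖z‖ := pow_succ _ _
      nlinarith
    refine lt_of_le_of_ne hle1 ?_
    intro h1
    have hΦ : z^(K+2) - ((Q:ℝ):ℂ) * z^(K+1) - ∑ i ∈ Finset.range (K+1), z^i = 0 := by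
      rw [← hTel z, hzeval, mul_zero]
    have hw : z^(K+1) * (z^2 - (((Q:ℝ):ℂ)+1) * z + (((Q:ℝ):ℂ)-1)) = -1 := by
      linear_combination (z - 1) * hΦ + geom_sum_mul z (K+1)
    have hnz : Complex.normSq z = 1 := by
      rw [Complex.normSq_eq_norm_sq, h1]
      norm_num
    have ha2 : z.re^2 + z.im^2 = 1 := by
      rw [Complex.normSq_apply] at hnz
      ring_nf at hnz ⊢
      linarith
    have hnw : Complex.normSq (z^2 - (((Q:ℝ):ℂ)+1) * z + (((Q:ℝ):ℂ)-1)) = 1 := by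
      have h2 := congrArg Complex.normSq hw
      rw [map_mul, map_pow, hnz, one_pow, one_mul] at h2
      simpa using h2
    have hre : (z^2 - (((Q:ℝ):ℂ)+1) * z + (((Q:ℝ):ℂ)-1)).re
        = z.re^2 - z.im^2 - (Q+1)*z.re + (Q-1) := by
      simp [pow_two, Complex.mul_re, Complex.sub_re, Complex.add_re,
        Complex.ofReal_re, Complex.ofReal_im, Complex.one_re]
      all_goals ring
    have him : (z^2 - (((Q:ℝ):ℂ)+1) * z + (((Q:ℝ):ℂ)-1)).im
        = 2*z.re*z.im - (Q+1)*z.im := by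
      simp [pow_two, Complex.mul_im, Complex.sub_im, Complex.add_im,
        Complex.ofReal_re, Complex.ofReal_im, Complex.one_im]
      all_goals ring
    have hpoly : (z.re^2 - z.im^2 - (Q+1)*z.re + (Q-1))^2
        + (2*z.re*z.im - (Q+1)*z.im)^2 = 1 := by
      rw [Complex.normSq_apply, hre, him] at hnw
      ring_nf at hnw ⊢
      linarith
    have hfact : (1 - z.re) * (2*(Q^2-Q+2) - 4*(Q-1)*z.re) = 0 := by
      linear_combination hpoly
        - (z.re^2 + z.im^2 - 2*Q*z.re - 2*z.re + Q^2 + 4) * ha2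
    have hre1 : z.re ≤ 1 := by nlinarith [sq_nonneg z.im]
    have hD2 : (0:ℝ) < 2*(Q^2-Q+2) - 4*(Q-1)*z.re := by nlinarith
    have hzre : z.re = 1 := by
      rcases mul_eq_zero.mp hfact with h | h
      · linarith
      · linarith
    have hzim : z.im = 0 := by
      have h2 : z.im^2 = 0 := by nlinarith
      exact pow_eq_zero_iff (by norm_num) |>.mp h2
    have hz1 : z = 1 := by
      apply Complex.ext
      · rw [hzre]; norm_num
      · rw [hzim]; norm_num
    rw [hz1] at hΦ
    have hone : ((1:ℂ) - ((Q:ℝ):ℂ)) - ((K:ℂ)+1) = 0 := by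
      simpa using hΦ
    have hone' : ((1:ℝ) - Q) - ((K:ℝ)+1) = 0 := by exact_mod_cast hone
    have hK0 : (0:ℝ) ≤ (K:ℝ) := Nat.cast_nonneg K
    linarith
  -- the shifted error sequence over ℂ
  set e : ℕ → ℂ := fun m => ((E ((m:ℤ) - K) : ℝ) : ℂ) with he
  have hop0 : ∀ n : ℕ, (∑ i ∈ Finset.range (K+2), P.coeff i * e (n+i)) = 0 := by
    intro n
    have hcalc : ∀ i ∈ Finset.range (K+2), P.coeff i * e (n+i)
        = ((c (K+1-i) * E ((n:ℤ) + i - K) : ℝ) : ℂ) := by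
      intro i hi
      rw [hPcoeff i, if_pos hi]
      simp only [he]
      have harg : ((n+i:ℕ):ℤ) - K = (n:ℤ) + i - K := by push_cast; ring
      rw [harg]
      push_cast
      ring
    have hsum : (∑ i ∈ Finset.range (K+2), c (K+1-i) * E ((n:ℤ) + i - K)) = u ((n:ℤ)+1) := by
      show _ = ∑ j ∈ Finset.range (K+2), c j * E ((n:ℤ)+1 - j)
      rw [← Finset.sum_range_reflect (fun j => c j * E ((n:ℤ)+1-j)) (K+2)]
      apply Finset.sum_congr rfl
      intro i hi
      have hi2 : i < K+2 := Finset.mem_range.mp hi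
      have e1 : K+2-1-i = K+1-i := by omega
      rw [e1]
      congr 1
      have e2 : ((K+1-i:ℕ):ℤ) = (K:ℤ)+1-(i:ℤ) := by omega
      rw [e2]
      ring_nf
    rw [Finset.sum_congr rfl hcalc, ← Complex.ofReal_sum, hsum,
      huzero ((n:ℤ)+1) (by omega)]
    norm_num
  have hetend : Tendsto e atTop (nhds 0) := by
    refine lemM_aux (K+1) P hPmonic hPdeg hProots e ?_
    have : (fun n => ∑ i ∈ Finset.range (K+1+1), P.coeff i * e (n+i)) = fun _ => (0:ℂ) :=
      funext hop0
    rw [this]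
    exact tendsto_const_nhds
  -- conclude
  have hfinal : ∀ n : ℕ, F (n : ℤ) - g γ * γ ^ n = (e (n + K)).re := by
    intro n
    have h1 : ((n + K : ℕ) : ℤ) - K = (n : ℤ) := by push_cast; ring
    have h2 : (e (n+K)).re = E ((n:ℤ)) := by
      rw [he]
      simp only [h1, Complex.ofReal_re]
    rw [h2]
    simp only [hE]
    rw [zpow_natCast]
  have : Tendsto (fun n : ℕ => (e (n + K)).re) atTop (nhds 0) := by
    have h1 : Tendsto (fun n : ℕ => e (n + K)) atTop (nhds 0) :=
      hetend.comp (tendsto_add_atTop_nat K)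
    have h2 : Tendsto (fun n : ℕ => (e (n + K)).re) atTop (nhds ((0:ℂ).re)) :=
      (Complex.continuous_re.tendsto 0).comp h1
    rwa [Complex.zero_re] at h2
  refine this.congr ?_
  intro n
  rw [hfinal n]
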